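/- For p, q, r > 0, |μ(p,q,r)| < |μ(p,q)|, where μ(p,q) = (p+q)log(p+q) − p log p − q log q and μ(p,q,r) is the alternating inclusion–exclusion sum Σ_{∅≠S⊆{p,q,r}} (−1)^{3−|S|} (Σ S) log(Σ S). That is, the magnitude of a 3-atom's measure is strictly less than that of any 2-atom beneath it. -/

import Mathlib

open Real Set

private lemma hasDerivAt_shift (c x : ℝ) (h : c + x ≠ 0) :
    HasDerivAt (fun t => (c + t) * Real.log (c + t)) (Real.log (c + x) + 1) x := by
  have h1 : HasDerivAt (fun t : ℝ => c + t) 1 x := (hasDerivAt_id x).const_add c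
  have h2 := (Real.hasDerivAt_mul_log h).comp x h1
  rw [mul_one] at h2
  exact h2

private lemma anti_aux (p q : ℝ) (hp : 0 < p) (hq : 0 < q) :
    StrictAntiOn (fun x => (p + q + x) * Real.log (p + q + x) + x * Real.log x
      - (p + x) * Real.log (p + x) - (q + x) * Real.log (q + x)) (Set.Ici 0) := by
  apply strictAntiOn_of_deriv_neg (convex_Ici 0)
  · have hc : Continuous fun x : ℝ => x * Real.log x := Real.continuous_mul_log
    fun_prop
  · intro x hx
    rw [interior_Ici] at hx
    have hx0 : 0 < x := hx
    have h1 := hasDerivAt_shift (p + q) x (by positivity)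
    have h2 := Real.hasDerivAt_mul_log (ne_of_gt hx0)
    have h3 := hasDerivAt_shift p x (by positivity)
    have h4 := hasDerivAt_shift q x (by positivity)
    have hd := ((h1.add h2).sub h3).sub h4
    have hd' : HasDerivAt (fun x => (p + q + x) * Real.log (p + q + x) + x * Real.log x
        - (p + x) * Real.log (p + x) - (q + x) * Real.log (q + x)) _ x := hd
    rw [hd'.deriv]
    have e1 : Real.log (p + q + x) + Real.log x = Real.log ((p + q + x) * x) :=
      (Real.log_mul (by positivity) (ne_of_gt hx0)).symm
    have e2 : Real.log (p + x) + Real.log (q + x) = Real.log ((p + x) * (q + x)) :=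
      (Real.log_mul (by positivity) (by positivity)).symm
    have hlt : Real.log ((p + q + x) * x) < Real.log ((p + x) * (q + x)) := by
      apply Real.log_lt_log (by positivity)
      nlinarith
    nlinarith [e1, e2]

theorem three_atom_magnitude_lt_two_atom (p q r : ℝ)
    (hp : 0 < p) (hq : 0 < q) (hr : 0 < r) :
    |(p + q + r) * Real.log (p + q + r)
      - (p + q) * Real.log (p + q) - (p + r) * Real.log (p + r)
      - (q + r) * Real.log (q + r)
      + p * Real.log p + q * Real.log q + r * Real.log r|
    < |(p + q) * Real.log (p + q) - p * Real.log p - q * Real.log q| := by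
  set H : ℝ → ℝ := fun x => (p + q + x) * Real.log (p + q + x) + x * Real.log x
      - (p + x) * Real.log (p + x) - (q + x) * Real.log (q + x) with hH
  have hanti : H r < H 0 := anti_aux p q hp hq (Set.mem_Ici.2 (le_refl 0)) (Set.mem_Ici.2 (le_of_lt hr)) hr
  -- H r > 0 by strict convexity
  have hconv := Real.strictConvexOn_mul_log
  have hs : p + q > 0 := by linarith
  have lam1 : (q / (p + q)) • r + (p / (p + q)) • (p + q + r) = p + r := by
    simp only [smul_eq_mul]; field_simp; ring
  have lam2 : (p / (p + q)) • r + (q / (p + q)) • (p + q + r) = q + r := by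
    simp only [smul_eq_mul]; field_simp; ring
  have hne : r ≠ p + q + r := by linarith
  have c1 := hconv.2 (Set.mem_Ici.2 hr.le) (Set.mem_Ici.2 (by linarith : (0:ℝ) ≤ p + q + r))
    hne (by positivity : (0:ℝ) < q / (p + q)) (by positivity : (0:ℝ) < p / (p + q))
    (by field_simp; try ring)
  have c2 := hconv.2 (Set.mem_Ici.2 hr.le) (Set.mem_Ici.2 (by linarith : (0:ℝ) ≤ p + q + r))
    hne (by positivity : (0:ℝ) < p / (p + q)) (by positivity : (0:ℝ) < q / (p + q))
    (by field_simp; try ring)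
  rw [lam1] at c1
  rw [lam2] at c2
  simp only [smul_eq_mul] at c1 c2
  have hHr : 0 < H r := by
    have := add_lt_add c1 c2
    have hrhs : q / (p + q) * (r * Real.log r) + p / (p + q) * ((p + q + r) * Real.log (p + q + r))
        + (p / (p + q) * (r * Real.log r) + q / (p + q) * ((p + q + r) * Real.log (p + q + r)))
        = r * Real.log r + (p + q + r) * Real.log (p + q + r) := by
      field_simp; ring
    have key : (p + r) * Real.log (p + r) + (q + r) * Real.log (q + r)
        < r * Real.log r + (p + q + r) * Real.log (p + q + r) := by
      linarith [this, hrhs]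
    simp only [hH]
    linarith
  have hH0 : H 0 = (p + q) * Real.log (p + q) - p * Real.log p - q * Real.log q := by
    simp [hH]
  have eμ3 : (p + q + r) * Real.log (p + q + r)
      - (p + q) * Real.log (p + q) - (p + r) * Real.log (p + r)
      - (q + r) * Real.log (q + r)
      + p * Real.log p + q * Real.log q + r * Real.log r = H r - H 0 := by
    rw [hH0]; simp only [hH]; ring
  rw [eμ3, ← hH0]
  rw [abs_of_neg (by linarith), abs_of_pos (by linarith)]
  linarith
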